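/- Suppose D is a sesquilinear form on X, T, E, M linear maps satisfying the Fundamental Identity D(x,y) - D(Tx,Ty) = ⟨Ex,Ey⟩_L - ⟨Mx,My⟩_{L'}. Fix ζ with |ζ|<1 and a contraction s(ζ) : L → L'. Then for all y₁, y₂ ∈ X: (1/2)D((T+ζI)y₁, (I - conj(ζ)T)y₂) - ζ⟨Ey₁, (E - s(ζ)*M)y₂⟩ = (1/2)D((T-ζI)y₁, (I + conj(ζ)T)y₂) + ζ⟨(s(ζ)E - M)y₁, My₂⟩. -/
import Mathlib


open scoped InnerProductSpace

set_option synthInstance.maxHeartbeats 1000000 in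
/-- Identity (13): if the sesquilinear form `D` (linear in the first argument, conjugate-linear
in the second) and the linear maps `T, E, M` satisfy the Fundamental Identity
`D(x,y) - D(Tx,Ty) = ⟨Ex,Ey⟩ - ⟨Mx,My⟩`, then for a fixed `ζ` with `|ζ| < 1` and a
contraction `s = s(ζ) : L → L'`, for all `y₁, y₂`:
`(1/2)D((T+ζI)y₁, (I - conj ζ·T)y₂) - ζ⟨Ey₁, (E - s*M)y₂⟩
  = (1/2)D((T-ζI)y₁, (I + conj ζ·T)y₂) + ζ⟨(sE - M)y₁, My₂⟩`. -/
theorem fundamental_identity_consequence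
    (X : Type*) [AddCommGroup X] [Module ℂ X]
    (L L' : Type*) [NormedAddCommGroup L] [InnerProductSpace ℂ L] [CompleteSpace L]
    [NormedAddCommGroup L'] [InnerProductSpace ℂ L'] [CompleteSpace L']
    (D : X →ₗ[ℂ] X →ₗ⋆[ℂ] ℂ) (T : X →ₗ[ℂ] X) (E : X →ₗ[ℂ] L) (M : X →ₗ[ℂ] L')
    (hFI : ∀ x y : X, D x y - D (T x) (T y) = ⟪E y, E x⟫_ℂ - ⟪M y, M x⟫_ℂ)
    (ζ : ℂ) (hζ : ‖ζ‖ < 1) (s : L →L[ℂ] L') (hs : ‖s‖ ≤ 1) :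
    ∀ y₁ y₂ : X,
      (1 / 2 : ℂ) * D (T y₁ + ζ • y₁) (y₂ - (starRingEnd ℂ) ζ • T y₂)
          - ζ * ⟪E y₂ - ContinuousLinearMap.adjoint s (M y₂), E y₁⟫_ℂ
        = (1 / 2 : ℂ) * D (T y₁ - ζ • y₁) (y₂ + (starRingEnd ℂ) ζ • T y₂)
            + ζ * ⟪M y₂, s (E y₁) - M y₁⟫_ℂ := by
  intro y₁ y₂
  have h := hFI y₁ y₂
  have hadj : ⟪ContinuousLinearMap.adjoint s (M y₂), E y₁⟫_ℂ = ⟪M y₂, s (E y₁)⟫_ℂ :=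
    ContinuousLinearMap.adjoint_inner_left s (E y₁) (M y₂)
  simp only [map_add, map_sub, map_smul, LinearMap.map_smulₛₗ, LinearMap.add_apply,
    LinearMap.sub_apply, LinearMap.smul_apply, smul_eq_mul, inner_sub_left, inner_sub_right,
    Complex.conj_conj, hadj] at *
  ring_nf
  linear_combination ζ * h
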